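/- arXiv:2108.02770 — 3 statements merged into one kernel-verified Lean document; each statement's English description precedes it below -/
import Mathlib

section
/- For every feasible schedule S of a finite DAG G = (V,E) on M identical machines with communication delay ρ (duplication allowed), the makespan of S is at least (L−1)·ρ, where L is the largest index such that the layer V_L of the ρ-layering of G is nonempty. -/
/-- Ancestors of `v` in the digraph with edge relation `E`:
all `u` with a directed path (possibly of length 0) from `u` to `v`. -/
def Anc {V : Type*} (E : V → V → Prop) (v : V) : Set V :=
  {u | Relation.ReflTransGen E u v}

/-- `cum E ρ i` is the union `V_1 ∪ … ∪ V_i` of the first `i` layers of the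
ρ-layering of the digraph. -/
def cum {V : Type*} (E : V → V → Prop) (ρ : ℕ) : ℕ → Set V
  | 0 => ∅
  | i + 1 => cum E ρ i ∪ {v | v ∉ cum E ρ i ∧ (Anc E v \ cum E ρ i).ncard ≤ ρ}

/-- The `i`-th layer `V_i` of the ρ-layering (so `layer E ρ 0 = ∅`). -/
def layer {V : Type*} (E : V → V → Prop) (ρ : ℕ) (i : ℕ) : Set V :=
  cum E ρ i \ cum E ρ (i - 1)

/-- Feasibility of a schedule-with-duplication `S` (a finite set of triples
(machine, job, start time)) for precedence relation `E`, `M` machines and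
communication delay `ρ`. -/
def Feasible {V : Type*} (E : V → V → Prop) (M ρ : ℕ)
    (S : Finset (ℕ × V × ℕ)) : Prop :=
  (∀ x ∈ S, x.1 < M) ∧
  (∀ v : V, ∃ m t, (m, v, t) ∈ S) ∧
  (∀ x ∈ S, ∀ y ∈ S, x ≠ y → ¬(x.1 = y.1 ∧ x.2.2 = y.2.2)) ∧
  (∀ x ∈ S, ∀ u : V, E u x.2.1 →
    ∃ y ∈ S, y.2.1 = u ∧
      ((y.1 = x.1 ∧ y.2.2 + 1 ≤ x.2.2) ∨ y.2.2 + 1 + ρ ≤ x.2.2))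

/-- The makespan of a schedule: `1 + max t` over its triples (0 if empty). -/
def makespan {V : Type*} (S : Finset (ℕ × V × ℕ)) : ℕ :=
  S.sup (fun x => x.2.2 + 1)

lemma anc_witness {V : Type*} {E : V → V → Prop} {M ρ : ℕ}
    {S : Finset (ℕ × V × ℕ)} (hS : Feasible E M ρ S)
    {u w : V} (h : Relation.TransGen E u w) :
    ∀ x ∈ S, x.2.1 = w → ∃ y ∈ S, y.2.1 = u ∧
      ((y.1 = x.1 ∧ y.2.2 < x.2.2) ∨ y.2.2 + 1 + ρ ≤ x.2.2) := by
  induction h with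
  | single hub =>
    intro x hx hxw
    obtain ⟨y, hy, hyu, hc⟩ := hS.2.2.2 x hx u (by rw [hxw]; exact hub)
    exact ⟨y, hy, hyu, by omega⟩
  | tail _ hbc ih =>
    intro x hx hxw
    obtain ⟨z, hz, hzb, hzc⟩ := hS.2.2.2 x hx _ (by rw [hxw]; exact hbc)
    obtain ⟨y, hy, hyu, hyc⟩ := ih z hz hzb
    refine ⟨y, hy, hyu, ?_⟩
    rcases hyc with ⟨hm, ht⟩ | ht <;> rcases hzc with ⟨hm', ht'⟩ | ht'
    · exact Or.inl ⟨hm.trans hm', by omega⟩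
    all_goals exact Or.inr (by omega)

lemma time_lower {V : Type*} [Fintype V] {E : V → V → Prop} {M ρ : ℕ}
    (hρ : 1 ≤ ρ) {S : Finset (ℕ × V × ℕ)} (hS : Feasible E M ρ S) :
    ∀ i, ∀ x ∈ S, x.2.1 ∉ cum E ρ i → i * ρ ≤ x.2.2 := by
  intro i
  induction i with
  | zero => intro x _ _; simp
  | succ i ih =>
    intro x hx hv
    rw [cum] at hv
    have hv1 : x.2.1 ∉ cum E ρ i := fun h => hv (Or.inl h)
    have hv2 : ρ + 1 ≤ (Anc E x.2.1 \ cum E ρ i).ncard := by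
      by_contra h
      exact hv (Or.inr ⟨hv1, by omega⟩)
    set v := x.2.1 with hvdef
    set A := Anc E v \ cum E ρ i with hAdef
    have hvA : v ∈ A := ⟨Relation.ReflTransGen.refl, hv1⟩
    set B := A \ {v} with hBdef
    have hBA : B ⊆ A := Set.diff_subset
    have hB : ρ ≤ B.ncard := by
      have h1 : ({v} : Set V) ⊆ A := Set.singleton_subset_iff.mpr hvA
      have h2 := Set.ncard_diff h1 (Set.toFinite _)
      rw [Set.ncard_singleton, ← hBdef] at h2
      have h3 : ρ + 1 ≤ A.ncard := hv2
      omega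
    by_cases hcase : ∃ u ∈ B, ∃ y ∈ S, y.2.1 = u ∧ y.2.2 + ρ + 1 ≤ x.2.2
    · obtain ⟨u, hu, y, hy, hyu, hle⟩ := hcase
      have hun : y.2.1 ∉ cum E ρ i := by rw [hyu]; exact (hBA hu).2
      have := ih y hy hun
      rw [Nat.succ_mul]
      omega
    · push_neg at hcase
      have key : ∀ u : V, ∃ y : ℕ × V × ℕ, u ∈ B →
          y ∈ S ∧ y.2.1 = u ∧ y.1 = x.1 ∧ y.2.2 < x.2.2 ∧
            x.2.2 ≤ y.2.2 + ρ ∧ i * ρ ≤ y.2.2 := by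
        intro u
        by_cases hu : u ∈ B
        · have huv : u ≠ v := fun h => hu.2 (by simp [h])
          have hTG : Relation.TransGen E u v := by
            rcases Relation.reflTransGen_iff_eq_or_transGen.mp (hBA hu).1 with h | h
            · exact absurd h.symm huv
            · exact h
          obtain ⟨y, hy, hyu, hyc⟩ := anc_witness hS hTG x hx rfl
          have hnot := hcase u hu y hy hyu
          have hun : y.2.1 ∉ cum E ρ i := by rw [hyu]; exact (hBA hu).2
          have h1 := ih y hy hun
          rcases hyc with ⟨hm, ht⟩ | ht
          · exact ⟨y, fun _ => ⟨hy, hyu, hm, ht, by omega, h1⟩⟩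
          · omega
        · exact ⟨x, fun h => absurd h hu⟩
      choose g hg using key
      have hinj : Set.InjOn (fun u => (g u).2.2) B := by
        intro u1 hu1 u2 hu2 heq
        by_contra hne
        obtain ⟨hy1, hy1u, hm1, _, _, _⟩ := hg u1 hu1
        obtain ⟨hy2, hy2u, hm2, _, _, _⟩ := hg u2 hu2
        have hne' : g u1 ≠ g u2 := fun h => hne (by rw [← hy1u, ← hy2u, h])
        exact hS.2.2.1 _ hy1 _ hy2 hne' ⟨hm1.trans hm2.symm, heq⟩
      have hmaps : ∀ u ∈ B, (fun u => (g u).2.2) u ∈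
          Set.Ico (max (i * ρ) (x.2.2 - ρ)) x.2.2 := by
        intro u hu
        obtain ⟨_, _, _, h4, h5, h6⟩ := hg u hu
        show (g u).2.2 ∈ Set.Ico _ _
        exact ⟨max_le h6 (by omega), h4⟩
      have hcard : B.ncard ≤ (Set.Ico (max (i * ρ) (x.2.2 - ρ)) x.2.2).ncard := by
        rw [← Set.ncard_image_of_injOn hinj]
        exact Set.ncard_le_ncard (Set.image_subset_iff.mpr hmaps) (Set.toFinite _)
      rw [← Finset.coe_Ico, Set.ncard_coe_finset, Nat.card_Ico] at hcard
      have hmax : i * ρ ≤ max (i * ρ) (x.2.2 - ρ) := le_max_left _ _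
      rw [Nat.succ_mul]
      omega

/-- any feasible schedule has makespan at least `(L-1)·ρ`, where
`L` is the largest index of a nonempty layer of the ρ-layering. -/
theorem makespan_lower_bound_layers {V : Type*} [Fintype V]
    (E : V → V → Prop) (hacyc : ∀ v, ¬ Relation.TransGen E v v)
    (M ρ : ℕ) (hM : 1 ≤ M) (hρ : 1 ≤ ρ)
    (S : Finset (ℕ × V × ℕ)) (hS : Feasible E M ρ S)
    (L : ℕ) (hLne : (layer E ρ L).Nonempty)
    (hLmax : ∀ i, L < i → layer E ρ i = ∅) :
    (L - 1) * ρ ≤ makespan S := by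
  obtain ⟨v, hv⟩ := hLne
  have hvn : v ∉ cum E ρ (L - 1) := hv.2
  obtain ⟨m, t, hmt⟩ := hS.2.1 v
  have h2 : (L - 1) * ρ ≤ t := time_lower hρ hS (L - 1) (m, v, t) hmt hvn
  have hsup : t + 1 ≤ makespan S := Finset.le_sup (f := fun x => x.2.2 + 1) hmt
  omega
end

section
/- Let S be a feasible schedule of a finite DAG G = (V,E) on M identical machines with communication delay ρ (duplication allowed), and let V_1, V_2, … be the ρ-layering of G. Then for every i ≥ 0 and every triple (m, v, t) ∈ S with v ∉ V_1 ∪ … ∪ V_i, the start time satisfies t ≥ i·ρ. -/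
lemma anc_copy {V : Type*} (E : V → V → Prop) (M ρ : ℕ)
    (S : Finset (ℕ × V × ℕ)) (hS : Feasible E M ρ S)
    (x : ℕ × V × ℕ) (hx : x ∈ S) (u : V)
    (hu : Relation.ReflTransGen E u x.2.1) (hne : u ≠ x.2.1) :
    ∃ y ∈ S, y.2.1 = u ∧
      ((y.1 = x.1 ∧ y.2.2 + 1 ≤ x.2.2) ∨ y.2.2 + 1 + ρ ≤ x.2.2) := by
  have main : ∀ a : V, Relation.ReflTransGen E a x.2.1 →
      a = x.2.1 ∨ ∃ y ∈ S, y.2.1 = a ∧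
        ((y.1 = x.1 ∧ y.2.2 + 1 ≤ x.2.2) ∨ y.2.2 + 1 + ρ ≤ x.2.2) := by
    intro a ha
    induction ha using Relation.ReflTransGen.head_induction_on with
    | refl => exact Or.inl rfl
    | head hab _ ih =>
      rename_i a b _
      right
      rcases ih with hb | ⟨z, hz, hz1, hz2⟩
      · subst hb
        exact hS.2.2.2 x hx a hab
      · obtain ⟨y, hy, hy1, hy2⟩ := hS.2.2.2 z hz a (by rw [hz1]; exact hab)
        refine ⟨y, hy, hy1, ?_⟩
        rcases hz2 with ⟨hm, ht⟩ | ht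
        · rcases hy2 with ⟨hm', ht'⟩ | ht'
          · exact Or.inl ⟨hm'.trans hm, by omega⟩
          · exact Or.inr (by omega)
        · rcases hy2 with ⟨hm', ht'⟩ | ht'
          · exact Or.inr (by omega)
          · exact Or.inr (by omega)
  rcases main u hu with h | h
  · exact absurd h hne
  · exact h

/-- in any feasible schedule, every copy of a job lying outside
the first `i` layers `V_1 ∪ … ∪ V_i` of the ρ-layering starts no earlier than
time `i·ρ`. -/
theorem start_time_lower_bound_layers {V : Type*} [Fintype V]
    (E : V → V → Prop) (hacyc : ∀ v, ¬ Relation.TransGen E v v)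
    (M ρ : ℕ) (hM : 1 ≤ M) (hρ : 1 ≤ ρ)
    (S : Finset (ℕ × V × ℕ)) (hS : Feasible E M ρ S)
    (i : ℕ) (x : ℕ × V × ℕ) (hx : x ∈ S) (hv : x.2.1 ∉ cum E ρ i) :
    i * ρ ≤ x.2.2 := by
  induction i generalizing x with
  | zero => simpa using Nat.zero_le x.2.2
  | succ i ih =>
    set v := x.2.1 with hvdef
    set t := x.2.2 with htdef
    have hvi : v ∉ cum E ρ i := fun h => hv (Or.inl h)
    have hB : ρ < (Anc E v \ cum E ρ i).ncard := by
      by_contra h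
      push_neg at h
      exact hv (Or.inr ⟨hvi, h⟩)
    by_contra ht
    push_neg at ht
    rw [Nat.succ_mul] at ht
    set A : Set V := (Anc E v \ cum E ρ i) \ {v} with hAdef
    have hAcard : ρ ≤ A.ncard := by
      have hvmem : v ∈ Anc E v \ cum E ρ i :=
        ⟨Relation.ReflTransGen.refl, hvi⟩
      have h2 := Set.ncard_diff_singleton_add_one hvmem (Set.toFinite _)
      rw [← hAdef] at h2
      omega
    -- every u ∈ A has a copy on x's machine in [i*ρ, t)
    have key : ∀ u : V, ∃ y : ℕ × V × ℕ, u ∈ A →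
        y ∈ S ∧ y.1 = x.1 ∧ y.2.1 = u ∧ i * ρ ≤ y.2.2 ∧ y.2.2 < t := by
      intro u
      by_cases hu : u ∈ A
      · obtain ⟨⟨hanc, hucum⟩, hune⟩ := hu
        simp only [Set.mem_singleton_iff] at hune
        obtain ⟨y, hy, hy1, hy2⟩ := anc_copy E M ρ S hS x hx u hanc hune
        have hylb : i * ρ ≤ y.2.2 := ih y hy (by rw [hy1]; exact hucum)
        rcases hy2 with ⟨hm, hts⟩ | hts
        · exact ⟨y, fun _ => ⟨hy, hm, hy1, hylb, by omega⟩⟩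
        · omega
      · exact ⟨x, fun h => absurd h hu⟩
    choose f hf using key
    have hinj : Set.InjOn (fun u => (f u).2.2) A := by
      intro u1 h1 u2 h2 heq
      obtain ⟨hf1, hm1, hj1, _, _⟩ := hf u1 h1
      obtain ⟨hf2, hm2, hj2, _, _⟩ := hf u2 h2
      by_contra hne
      have hfne : f u1 ≠ f u2 := by
        intro h
        exact hne (by rw [← hj1, ← hj2, h])
      exact hS.2.2.1 (f u1) hf1 (f u2) hf2 hfne ⟨hm1.trans hm2.symm, heq⟩
    have himg : (fun u => (f u).2.2) '' A ⊆ Set.Ico (i * ρ) t := by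
      rintro s ⟨u, hu, rfl⟩
      obtain ⟨_, _, _, h1, h2⟩ := hf u hu
      exact ⟨h1, h2⟩
    have hcard1 : A.ncard = ((fun u => (f u).2.2) '' A).ncard :=
      (Set.ncard_image_of_injOn hinj).symm
    have hcard2 : ((fun u => (f u).2.2) '' A).ncard ≤ (Set.Ico (i * ρ) t).ncard :=
      Set.ncard_le_ncard himg (Set.finite_Ico _ _)
    have hIco : (Set.Ico (i * ρ) t).ncard = t - i * ρ := by
      rw [Set.ncard_eq_toFinset_card', Set.toFinset_Ico, Nat.card_Ico]
    have : ρ ≤ t - i * ρ := by omega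
    have hlb : i * ρ ≤ t := le_trans (by omega : i * ρ ≤ i * ρ) (by omega)
    omega
end

section
/- Let G = (V,E) be a finite DAG, ρ ≥ 1 an integer, and let L be the largest index of a nonempty layer of the ρ-layering V_1, V_2, … of G. Suppose W_1, W_2, … are pairwise disjoint subsets of V such that, for every i ≥ 1, writing G_i for the induced subgraph of G on V ∖ (W_1 ∪ … ∪ W_{i−1}): W_i is ancestor-closed in G_i, and W_i contains every vertex v of G_i whose ancestor set in G_i has size at most ρ. Then W_1 ∪ … ∪ W_L = V. -/
/-- Ancestors of `v` in the subgraph induced on the vertex set `W`: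
all `u` with a directed path from `u` to `v` staying inside `W`. -/
def AncIn {V : Type*} (E : V → V → Prop) (W : Set V) (v : V) : Set V :=
  {u | Relation.ReflTransGen (fun a b => E a b ∧ a ∈ W ∧ b ∈ W) u v}

/-- if pairwise disjoint sets `W 1, W 2, …` are peeled off so that
each `W i` is ancestor-closed in the graph `G i` induced on the not-yet-peeled
vertices and contains every vertex of `G i` with at most `ρ` ancestors in `G i`,
then the first `L` of them cover all of `V`, where `L` is the largest index of a
nonempty layer of the ρ-layering of `G`. -/
theorem peeling_covers_in_L_phases {V : Type*} [Fintype V]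
    (E : V → V → Prop) (hacyc : ∀ v, ¬ Relation.TransGen E v v)
    (ρ : ℕ) (hρ : 1 ≤ ρ)
    (L : ℕ) (hLne : (layer E ρ L).Nonempty)
    (hLmax : ∀ i, L < i → layer E ρ i = ∅)
    (W : ℕ → Set V)
    (hdisj : ∀ i j, 1 ≤ i → 1 ≤ j → i ≠ j → Disjoint (W i) (W j))
    (hclosed : ∀ i, 1 ≤ i → ∀ v ∈ W i,
      AncIn E (⋃ j ∈ Finset.Icc 1 (i - 1), W j)ᶜ v ⊆ W i)
    (hsmall : ∀ i, 1 ≤ i → ∀ v ∈ (⋃ j ∈ Finset.Icc 1 (i - 1), W j)ᶜ,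
      (AncIn E (⋃ j ∈ Finset.Icc 1 (i - 1), W j)ᶜ v).ncard ≤ ρ → v ∈ W i) :
    (⋃ j ∈ Finset.Icc 1 L, W j) = Set.univ := by
  classical
  -- Step 1: if `cum E ρ i` is not everything, it strictly grows.
  have hstep : ∀ i, cum E ρ i ≠ Set.univ → cum E ρ i ⊂ cum E ρ (i + 1) := by
    intro i hne
    have hS : ((cum E ρ i)ᶜ).Nonempty := by
      rwa [Set.nonempty_compl]
    have : IsIrrefl V (Relation.TransGen E) := ⟨hacyc⟩
    have wf : WellFounded (Relation.TransGen E) :=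
      Finite.wellFounded_of_trans_of_irrefl _
    obtain ⟨v, hv, hmin⟩ := wf.has_min _ hS
    have hsub : Anc E v \ cum E ρ i ⊆ {v} := by
      rintro u ⟨hu1, hu2⟩
      rcases (Relation.reflTransGen_iff_eq_or_transGen.mp hu1) with h | h
      · simp [h]
      · exact absurd h (hmin u hu2)
    have hvmem : v ∈ cum E ρ (i + 1) := by
      refine Or.inr ⟨hv, ?_⟩
      calc (Anc E v \ cum E ρ i).ncard ≤ ({v} : Set V).ncard :=
            Set.ncard_le_ncard hsub (Set.finite_singleton v)
        _ = 1 := Set.ncard_singleton v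
        _ ≤ ρ := hρ
    refine ⟨Set.subset_union_left, fun hcont => hv (hcont hvmem)⟩
  -- Step 2: `cum E ρ L = univ`.
  have hcumL : cum E ρ L = Set.univ := by
    by_contra hne
    have h1 := hstep L hne
    have h2 : layer E ρ (L + 1) = ∅ := hLmax (L + 1) (by omega)
    have : cum E ρ (L + 1) ⊆ cum E ρ L := by
      have : cum E ρ (L + 1) \ cum E ρ L = ∅ := by
        simpa [layer] using h2
      exact Set.diff_eq_empty.mp this
    exact absurd (h1.trans_subset this) (lt_irrefl _)
  -- Step 3: `cum E ρ i ⊆ ⋃_{j ≤ i} W j` by induction.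
  have hcover : ∀ i, cum E ρ i ⊆ ⋃ j ∈ Finset.Icc 1 i, W j := by
    intro i
    induction i with
    | zero => exact fun v hv => absurd hv (Set.notMem_empty v)
    | succ i ih =>
      intro v hv
      have hmono : (⋃ j ∈ Finset.Icc 1 i, W j) ⊆ ⋃ j ∈ Finset.Icc 1 (i + 1), W j := by
        intro u hu
        simp only [Set.mem_iUnion] at hu ⊢
        obtain ⟨j, hj, hju⟩ := hu
        exact ⟨j, Finset.mem_Icc.mpr ⟨(Finset.mem_Icc.mp hj).1,
          (Finset.mem_Icc.mp hj).2.trans (Nat.le_succ i)⟩, hju⟩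
      rcases hv with hv | ⟨hv1, hv2⟩
      · exact hmono (ih hv)
      · by_cases hvW : v ∈ ⋃ j ∈ Finset.Icc 1 i, W j
        · exact hmono hvW
        · set C : Set V := (⋃ j ∈ Finset.Icc 1 i, W j)ᶜ with hC
          have hvC : v ∈ C := hvW
          have hCnc : C ⊆ (cum E ρ i)ᶜ := Set.compl_subset_compl.mpr ih
          have hanc : AncIn E C v ⊆ Anc E v \ cum E ρ i := by
            intro u hu
            refine ⟨Relation.ReflTransGen.mono (p := E) (fun a b hab => hab.1) _ _ hu, ?_⟩
            rcases Relation.ReflTransGen.cases_head hu with h | ⟨c, hc, _⟩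
            · exact hCnc (h ▸ hvC)
            · exact hCnc hc.2.1
          have hcard : (AncIn E C v).ncard ≤ ρ :=
            le_trans (Set.ncard_le_ncard hanc (Set.toFinite _)) hv2
          have hCeq : (⋃ j ∈ Finset.Icc 1 ((i + 1) - 1), W j)ᶜ = C := by
            simp [hC]
          have hvWi : v ∈ W (i + 1) := by
            refine hsmall (i + 1) (by omega) v ?_ ?_
            · rw [hCeq]; exact hvC
            · rw [hCeq]; exact hcard
          simp only [Set.mem_iUnion]
          exact ⟨i + 1, Finset.mem_Icc.mpr ⟨by omega, le_rfl⟩, hvWi⟩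
  refine Set.eq_univ_of_univ_subset ?_
  rw [← hcumL]
  exact hcover L
end
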